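/- Let M be a real m-dimensional C^1 manifold, x a point of M, and f_1, ..., f_m complex-valued C^1 functions on a neighborhood U of x such that f = (f_1, ..., f_m) : U → C^m is an embedding. Then the complex dimension of the complex tangent space H_{f(x)}f(U) to the submanifold f(U) of C^m at f(x) equals m minus the complex dimension of the span of {df_1(x), ..., df_m(x)} in the complexified cotangent space of M at x. -/

import Mathlib

open scoped Manifold

open Module Submodule

section Aux
variable {m : ℕ}

noncomputable def cExt (L : EuclideanSpace ℝ (Fin m) →ₗ[ℝ] (Fin m → ℂ)) :
    EuclideanSpace ℂ (Fin m) →ₗ[ℂ] (Fin m → ℂ) where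
  toFun v := ∑ k, v k • L (EuclideanSpace.single k 1)
  map_add' u v := by
    simp [add_smul, Finset.sum_add_distrib]
  map_smul' c v := by
    simp [Finset.smul_sum, smul_smul]

lemma euclidean_sum_single (v : EuclideanSpace ℝ (Fin m)) :
    ∑ k, v k • EuclideanSpace.single k (1 : ℝ) = v := by
  ext j
  rw [show (∑ k, v k • EuclideanSpace.single k (1:ℝ)) j
      = ∑ k, (v k • EuclideanSpace.single k (1:ℝ)) j from by rw [WithLp.ofLp_sum, Finset.sum_apply]]
  simp [EuclideanSpace.single_apply]

lemma cExt_real (L : EuclideanSpace ℝ (Fin m) →ₗ[ℝ] (Fin m → ℂ))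
    (v : EuclideanSpace ℝ (Fin m)) :
    cExt L (WithLp.toLp 2 (fun k => (v k : ℂ))) = L v := by
  conv_rhs => rw [← euclidean_sum_single v]
  rw [map_sum]
  show ∑ k, ((v k : ℂ)) • L (EuclideanSpace.single k 1) = _
  congr 1; funext k
  rw [map_smul, Complex.coe_smul]

lemma euclideanC_decomp (v : EuclideanSpace ℂ (Fin m)) :
    v = WithLp.toLp 2 (fun k => ((v k).re : ℂ)) + Complex.I • WithLp.toLp 2 (fun k => ((v k).im : ℂ)) := by
  ext k
  show v k = ((v k).re : ℂ) + Complex.I • ((v k).im : ℂ)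
  rw [smul_eq_mul, mul_comm, Complex.re_add_im]

lemma cExt_decomp (L : EuclideanSpace ℝ (Fin m) →ₗ[ℝ] (Fin m → ℂ))
    (v : EuclideanSpace ℂ (Fin m)) :
    cExt L v = L (WithLp.toLp 2 (fun k => (v k).re)) + Complex.I • L (WithLp.toLp 2 (fun k => (v k).im)) := by
  conv_lhs => rw [euclideanC_decomp v]
  rw [map_add, map_smul]
  exact congr_arg₂ (· + ·) (cExt_real L (WithLp.toLp 2 (fun k => (v k).re)))
    (congrArg (Complex.I • ·) (cExt_real L (WithLp.toLp 2 (fun k => (v k).im))))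

lemma Jmap_apply (w : Fin m → ℂ) :
    ((Complex.I • (LinearMap.id : (Fin m → ℂ) →ₗ[ℂ] (Fin m → ℂ))).restrictScalars ℝ) w
      = Complex.I • w := rfl

lemma range_cExt (L : EuclideanSpace ℝ (Fin m) →ₗ[ℝ] (Fin m → ℂ)) :
    (LinearMap.range (cExt L)).restrictScalars ℝ =
      (LinearMap.range L) ⊔ (LinearMap.range L).map
        ((Complex.I • (LinearMap.id : (Fin m → ℂ) →ₗ[ℂ] (Fin m → ℂ))).restrictScalars ℝ) := by
  apply le_antisymm
  · rintro w ⟨v, rfl⟩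
    rw [cExt_decomp]
    refine Submodule.add_mem _ (Submodule.mem_sup_left ⟨_, rfl⟩)
      (Submodule.mem_sup_right ?_)
    exact Submodule.mem_map_of_mem ⟨_, rfl⟩
  · refine sup_le ?_ ?_
    · rintro w ⟨v, rfl⟩
      exact ⟨WithLp.toLp 2 (fun k => (v k : ℂ)), cExt_real L v⟩
    · rintro w ⟨_, ⟨v, rfl⟩, rfl⟩
      refine ⟨Complex.I • WithLp.toLp 2 (fun k => (v k : ℂ)), ?_⟩
      rw [map_smul, cExt_real, Jmap_apply]

lemma span_proj_top :
    Submodule.span ℂ (Set.range fun i : Fin m =>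
      (LinearMap.proj i : (Fin m → ℂ) →ₗ[ℂ] ℂ)) = ⊤ := by
  rw [eq_top_iff]
  intro φ _
  have hφ : φ = ∑ i, φ (Pi.single i 1) • (LinearMap.proj i : (Fin m → ℂ) →ₗ[ℂ] ℂ) := by
    apply LinearMap.ext
    intro v
    conv_lhs => rw [show v = ∑ i, Pi.single i (v i) from (Finset.univ_sum_single v).symm]
    rw [map_sum, LinearMap.sum_apply]
    congr 1; funext i
    have : Pi.single i (v i) = v i • (Pi.single i (1 : ℂ) : Fin m → ℂ) := by
      rw [← Pi.single_smul, smul_eq_mul, mul_one]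
    rw [this, map_smul]
    simp [LinearMap.proj, mul_comm]
  rw [hφ]
  exact Submodule.sum_mem _ fun i _ =>
    Submodule.smul_mem _ _ (Submodule.subset_span ⟨i, rfl⟩)

end Aux


/-- Let `M` be a real `m`-dimensional `C¹` manifold, `x ∈ M`, and
`f = (f_1, …, f_m) : U → ℂᵐ` a `C¹` embedding of a neighborhood `U` of `x`
(injective immersion and topological embedding).  Then the complex dimension of the
complex tangent space `H_{f x} f(U) = T ∩ i T` (where `T = range (d f)_x` is the
tangent space of the submanifold `f(U)` of `ℂᵐ` at `f x`) equals `m` minus the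
complex dimension of the span of the differentials `df_1(x), …, df_m(x)`, regarded
(via their complex-linear extensions) as elements of the complexified cotangent
space of `M` at `x`. -/
theorem stmt_1 {m : ℕ} {M : Type*} [TopologicalSpace M]
    [ChartedSpace (EuclideanSpace ℝ (Fin m)) M]
    [HasGroupoid M (contDiffGroupoid 1 (𝓡 m))]
    (x : M) (U : Set M) (hU : IsOpen U) (hx : x ∈ U)
    (f : M → (Fin m → ℂ))
    (hf : ContMDiffOn (𝓡 m) 𝓘(ℝ, Fin m → ℂ) 1 f U)
    (himm : ∀ y ∈ U, Function.Injective (mfderiv (𝓡 m) 𝓘(ℝ, Fin m → ℂ) f y))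
    (hemb : Topology.IsEmbedding (U.restrict f))
    -- the tangent space `T = T_{f x} f(U) ⊆ ℂᵐ`, as a real subspace
    (T : Submodule ℝ (Fin m → ℂ))
    (hT : T = LinearMap.range (mfderiv (𝓡 m) 𝓘(ℝ, Fin m → ℂ) f x).toLinearMap)
    -- the complex tangent space `H_{f x} f(U) = T ∩ i T`, a complex subspace
    (H : Submodule ℂ (Fin m → ℂ))
    (hH : (H : Set (Fin m → ℂ)) =
      (T : Set (Fin m → ℂ)) ∩
        ((T.map ((Complex.I • (LinearMap.id : (Fin m → ℂ) →ₗ[ℂ] (Fin m → ℂ))).restrictScalars ℝ)) :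
          Set (Fin m → ℂ)))
    -- the differentials `df_i(x)`, complex-linearly extended to the complexified
    -- (co)tangent space `EuclideanSpace ℂ (Fin m)` of `M` at `x`
    (df : Fin m → Module.Dual ℂ (EuclideanSpace ℂ (Fin m)))
    (hdf : ∀ i (v : EuclideanSpace ℂ (Fin m)),
      df i v = ∑ k, v k *
        (show ℂ from (mfderiv (𝓡 m) 𝓘(ℝ, ℂ) (fun y => f y i) x)
          (EuclideanSpace.single k 1))) :
    Module.finrank ℂ H =
      m - Module.finrank ℂ (Submodule.span ℂ (Set.range df)) := by
  classical
  set L : EuclideanSpace ℝ (Fin m) →ₗ[ℝ] (Fin m → ℂ) :=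
    (mfderiv (𝓡 m) 𝓘(ℝ, Fin m → ℂ) f x).toLinearMap with hLdef
  -- components of the derivative
  have hc : ∀ i k, (mfderiv (𝓡 m) 𝓘(ℝ, ℂ) (fun y => f y i) x) (EuclideanSpace.single k 1)
      = L (EuclideanSpace.single k 1) i := by
    intro i k
    have hfd : MDifferentiableAt (𝓡 m) 𝓘(ℝ, Fin m → ℂ) f x :=
      (hf.contMDiffAt (hU.mem_nhds hx)).mdifferentiableAt one_ne_zero
    have hp := (ContinuousLinearMap.proj (R := ℝ) (φ := fun _ : Fin m => ℂ) i).hasMFDerivAt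
      (x := f x)
    have heq : mfderiv (𝓡 m) 𝓘(ℝ, ℂ) (fun y => f y i) x =
        mfderiv (𝓡 m) 𝓘(ℝ, ℂ) ((ContinuousLinearMap.proj i : (Fin m → ℂ) →L[ℝ] ℂ) ∘ f) x := rfl
    rw [heq, (hp.comp x hfd.hasMFDerivAt).mfderiv]
    rfl
  -- df is the composition of projections with the complexified derivative
  have hdf' : df = fun i => (cExt L).dualMap (LinearMap.proj i) := by
    funext i
    apply LinearMap.ext
    intro v
    rw [hdf i v]
    show _ = (∑ k, v k • L (EuclideanSpace.single k 1)) i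
    rw [Finset.sum_apply]
    congr 1; funext k
    rw [hc i k]
    rfl
  -- the span of the differentials is the range of the dual map
  have hspan : Submodule.span ℂ (Set.range df) = LinearMap.range (cExt L).dualMap := by
    rw [hdf']
    rw [show (Set.range fun i => (cExt L).dualMap (LinearMap.proj i)) =
        (cExt L).dualMap '' (Set.range fun i : Fin m =>
          (LinearMap.proj i : (Fin m → ℂ) →ₗ[ℂ] ℂ)) from (Set.range_comp _ _)]
    rw [Submodule.span_image, span_proj_top, Submodule.map_top]
  set W : Submodule ℂ (Fin m → ℂ) := LinearMap.range (cExt L) with hWdef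
  set T' : Submodule ℝ (Fin m → ℂ) := T.map
    ((Complex.I • (LinearMap.id : (Fin m → ℂ) →ₗ[ℂ] (Fin m → ℂ))).restrictScalars ℝ) with hT'def
  -- dimensions
  have hTm : finrank ℝ T = m := by
    have hinj : Function.Injective L := himm x hx
    rw [hT]
    exact (LinearMap.finrank_range_of_inj (himm x hx)).trans finrank_euclideanSpace_fin
  have hJinj : Function.Injective
      ((Complex.I • (LinearMap.id : (Fin m → ℂ) →ₗ[ℂ] (Fin m → ℂ))).restrictScalars ℝ) := by
    intro a b hab
    rw [Jmap_apply, Jmap_apply] at hab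
    exact smul_right_injective _ Complex.I_ne_zero hab
  have hT'm : finrank ℝ T' = m := by
    rw [hT'def, ← (Submodule.equivMapOfInjective _ hJinj T).finrank_eq]
    exact hTm
  have hWsup : W.restrictScalars ℝ = T ⊔ T' := by
    rw [hWdef, range_cExt, hT'def, hT]
    rfl
  have hHinf : H.restrictScalars ℝ = T ⊓ T' := by
    apply SetLike.ext'
    rw [Submodule.coe_restrictScalars, hH]
    rfl
  have e1 : finrank ℝ (W.restrictScalars ℝ) = 2 * finrank ℂ W := by
    rw [((Submodule.restrictScalarsEquiv ℝ ℂ _ W).restrictScalars ℝ).finrank_eq]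
    rw [← Module.finrank_mul_finrank ℝ ℂ W, Complex.finrank_real_complex]
  have e2 : finrank ℝ (H.restrictScalars ℝ) = 2 * finrank ℂ H := by
    rw [((Submodule.restrictScalarsEquiv ℝ ℂ _ H).restrictScalars ℝ).finrank_eq]
    rw [← Module.finrank_mul_finrank ℝ ℂ H, Complex.finrank_real_complex]
  have hsum := Submodule.finrank_sup_add_finrank_inf_eq T T'
  rw [← hWsup, ← hHinf, e1, e2, hTm, hT'm] at hsum
  have hWle : finrank ℂ W ≤ m := by
    have := Submodule.finrank_le W
    rwa [Module.finrank_fin_fun] at this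
  rw [hspan]
  rw [LinearMap.finrank_range_dualMap_eq_finrank_range]
  rw [← hWdef]
  omega
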